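/- Let (Ω, 𝔽, ℙ) carry a random type vector with components δ > 0, θ ∈ [0,1], μ > 0, σ ≥ 0, ν ≥ 0 and σ² + ν² > 0 almost surely. Set ψ = E[θ(1-δ)σ²/(ν²+σ²)] and φ = E[δμσ/(ν²+σ²)], assumed finite. If ψ ≠ 1, then the random variable π* = (θ(1-δ)σ·φ/(1-ψ) + μδ)/(ν²+σ²) satisfies the mean-field consistency condition E[σπ*] = φ/(1-ψ). Moreover, if ψ = 1 then no random variable π with E[σπ] finite satisfies E[σπ] = ψ·E[σπ] + φ. -/

import Mathlib

open MeasureTheory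

theorem stmt12 {Ω : Type*} [MeasurableSpace Ω] (P : Measure Ω) [IsProbabilityMeasure P]
    (δ θ μ σ ν : Ω → ℝ)
    (hae : ∀ᵐ ω ∂P, 0 < δ ω ∧ θ ω ∈ Set.Icc (0:ℝ) 1 ∧ 0 < μ ω ∧ 0 ≤ σ ω ∧ 0 ≤ ν ω ∧
      0 < σ ω ^ 2 + ν ω ^ 2)
    (hint1 : Integrable (fun ω => θ ω * (1 - δ ω) * σ ω ^ 2 / (ν ω ^ 2 + σ ω ^ 2)) P)
    (hint2 : Integrable (fun ω => δ ω * μ ω * σ ω / (ν ω ^ 2 + σ ω ^ 2)) P)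
    (ψ φ : ℝ)
    (hψ : ψ = ∫ ω, θ ω * (1 - δ ω) * σ ω ^ 2 / (ν ω ^ 2 + σ ω ^ 2) ∂P)
    (hφ : φ = ∫ ω, δ ω * μ ω * σ ω / (ν ω ^ 2 + σ ω ^ 2) ∂P)
    (πs : Ω → ℝ)
    (hπs : πs = fun ω =>
      (θ ω * (1 - δ ω) * σ ω * (φ/(1-ψ)) + μ ω * δ ω) / (ν ω ^ 2 + σ ω ^ 2)) :
    (ψ ≠ 1 → ∫ ω, σ ω * πs ω ∂P = φ/(1-ψ)) ∧
    (ψ = 1 → ¬ ∃ π : Ω → ℝ, Integrable (fun ω => σ ω * π ω) P ∧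
      ∫ ω, σ ω * π ω ∂P = ψ * ∫ ω, σ ω * π ω ∂P + φ) := by
  constructor
  · intro hne
    have h1ψ : 1 - ψ ≠ 0 := sub_ne_zero.mpr (Ne.symm hne)
    have haeq : ∀ᵐ ω ∂P, σ ω * πs ω =
        θ ω * (1 - δ ω) * σ ω ^ 2 / (ν ω ^ 2 + σ ω ^ 2) * (φ/(1-ψ)) +
        δ ω * μ ω * σ ω / (ν ω ^ 2 + σ ω ^ 2) := by
      filter_upwards [hae] with ω hω
      have hD : ν ω ^ 2 + σ ω ^ 2 ≠ 0 := by
        have := hω.2.2.2.2.2; nlinarith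
      rw [hπs]
      field_simp
    rw [integral_congr_ae haeq,
      integral_add (hint1.mul_const _) hint2,
      integral_mul_const, ← hψ, ← hφ]
    field_simp
    ring
  · rintro h1 ⟨π, hInt, heq⟩
    rw [h1, one_mul] at heq
    have hφ0 : φ = 0 := by linarith
    have hnn : 0 ≤ᵐ[P] fun ω => δ ω * μ ω * σ ω / (ν ω ^ 2 + σ ω ^ 2) := by
      filter_upwards [hae] with ω hω
      obtain ⟨hδ, hθ, hμ, hσ, hν, hD⟩ := hω
      have : (0:ℝ) < ν ω ^ 2 + σ ω ^ 2 := by nlinarith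
      exact div_nonneg (by positivity) this.le
    have hzero : (fun ω => δ ω * μ ω * σ ω / (ν ω ^ 2 + σ ω ^ 2)) =ᵐ[P] 0 :=
      (integral_eq_zero_iff_of_nonneg_ae hnn hint2).mp (by rw [← hφ, hφ0])
    have hσ0 : ∀ᵐ ω ∂P, σ ω = 0 := by
      filter_upwards [hae, hzero] with ω hω hz
      obtain ⟨hδ, hθ, hμ, hσ, hν, hD⟩ := hω
      have hDpos : (0:ℝ) < ν ω ^ 2 + σ ω ^ 2 := by nlinarith
      simp only [Pi.zero_apply] at hz
      have h0 : δ ω * μ ω * σ ω = 0 := by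
        have := div_eq_zero_iff.mp hz
        rcases this with h | h
        · exact h
        · exact absurd h hDpos.ne'
      by_contra h
      have hσp : 0 < σ ω := lt_of_le_of_ne hσ (Ne.symm h)
      nlinarith [mul_pos (mul_pos hδ hμ) hσp]
    have hf0 : (fun ω => θ ω * (1 - δ ω) * σ ω ^ 2 / (ν ω ^ 2 + σ ω ^ 2)) =ᵐ[P] 0 := by
      filter_upwards [hσ0] with ω hz
      simp [hz]
    have : ψ = 0 := by rw [hψ, integral_congr_ae hf0]; simp
    rw [h1] at this
    norm_num at this
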